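/- Let P be a poset and 𝓜 a minimal subset selection on P. Suppose the 𝓜-convergence structure in P satisfies the Iterated Limits axiom: whenever a net (x_i)_{i∈I} 𝓜-converges to x and, for each i ∈ I, a net (x_{i,j})_{j∈J(i)} 𝓜-converges to x_i, the net (i, f) ↦ x_{i, f(i)}, indexed by K := I × Π_{i∈I} J(i) with the pointwise (product) order, 𝓜-converges to x. Then P is 𝓜-continuous. -/

import Mathlib

universe u

/-- A directed preordered index for a net: `r` is reflexive, transitive,
the index type is nonempty, and `r` is directed. -/
structure IsDirNet {I : Type u} (r : I → I → Prop) : Prop where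
  refl : ∀ i, r i i
  trans : ∀ {i j k : I}, r i j → r j k → r i k
  nonempty : Nonempty I
  directed : ∀ i j, ∃ k, r i k ∧ r j k

/-- A minimal subset selection on a poset `P`. -/
def MinSel {P : Type u} [PartialOrder P] (M : Set (Set P)) : Prop :=
  (∅ : Set P) ∉ M ∧ ∀ x : P, {x} ∈ M

/-- The net `f : I → P` (indexed by `(I, r)`) `𝓜`-converges to `x`. -/
def MConv {P : Type u} [PartialOrder P] (M : Set (Set P))
    {I : Type u} (r : I → I → Prop) (f : I → P) (x : P) : Prop :=
  ∃ A : Set P, ∃ s : P, A ∈ M ∧ IsLUB A s ∧ x ≤ s ∧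
    ∀ a ∈ A, ∃ i₀, ∀ i, r i₀ i → a ≤ f i

/-- The topology `τ_𝓜` induced by `𝓜`-convergence, as a collection of open sets. -/
def mTop {P : Type u} [PartialOrder P] (M : Set (Set P)) : Set (Set P) :=
  {U | ∀ (I : Type u) (r : I → I → Prop) (f : I → P) (x : P),
      IsDirNet r → MConv M r f x → x ∈ U → ∃ i₀, ∀ i, r i₀ i → f i ∈ U}

/-- The `𝓜`-convergence structure is topological: every net converging to `x` with
respect to `τ_𝓜` also `𝓜`-converges to `x`. -/
def MTopological {P : Type u} [PartialOrder P] (M : Set (Set P)) : Prop :=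
  ∀ (I : Type u) (r : I → I → Prop) (f : I → P) (x : P), IsDirNet r →
    (∀ U ∈ mTop M, x ∈ U → ∃ i₀, ∀ i, r i₀ i → f i ∈ U) →
    MConv M r f x

/-- The `𝓜`-way-below relation `x ≪_𝓜 y`. -/
def wayBelowM {P : Type u} [PartialOrder P] (M : Set (Set P)) (x y : P) : Prop :=
  ∀ (A : Set P) (s : P), A ∈ M → IsLUB A s → y ≤ s →
    ∃ B : Set P, B.Nonempty ∧ B.Finite ∧ B ⊆ A ∧ upperBounds B ⊆ Set.Ici x

/-- `𝓜`-continuity of the poset `P`. -/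
def MCont {P : Type u} [PartialOrder P] (M : Set (Set P)) : Prop :=
  ∀ x : P,
    (∃ A : Set P, ∃ s : P, A ∈ M ∧ IsLUB A s ∧ A ⊆ {y | wayBelowM M y x} ∧ x ≤ s) ∧
    {y | wayBelowM M x y} ∈ mTop M

private lemma ev_all_finset {I : Type u} {r : I → I → Prop} (hr : IsDirNet r)
    {α : Type u} (s : Finset α) {p : α → I → Prop}
    (h : ∀ b ∈ s, ∃ i₀, ∀ i, r i₀ i → p b i) :
    ∃ i₀, ∀ i, r i₀ i → ∀ b ∈ s, p b i := by
  classical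
  revert h
  induction s using Finset.induction_on with
  | empty =>
    intro _
    obtain ⟨i⟩ := hr.nonempty
    exact ⟨i, fun i _ b hb => absurd hb (by simp)⟩
  | insert _ _ ha ih =>
    intro h
    obtain ⟨i₁, h₁⟩ := h _ (Finset.mem_insert_self _ _)
    obtain ⟨i₂, h₂⟩ := ih fun b hb => h b (Finset.mem_insert_of_mem hb)
    obtain ⟨k, hk₁, hk₂⟩ := hr.directed i₁ i₂
    refine ⟨k, fun i hi b hb => ?_⟩
    rcases Finset.mem_insert.mp hb with rfl | hb
    · exact h₁ i (hr.trans hk₁ hi)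
    · exact h₂ i (hr.trans hk₂ hi) b hb

private lemma ev_all {I : Type u} {r : I → I → Prop} (hr : IsDirNet r)
    {α : Type u} {B : Set α} (hB : B.Finite) {p : α → I → Prop}
    (h : ∀ b ∈ B, ∃ i₀, ∀ i, r i₀ i → p b i) :
    ∃ i₀, ∀ i, r i₀ i → ∀ b ∈ B, p b i := by
  obtain ⟨i₀, h₀⟩ := ev_all_finset hr hB.toFinset (p := p)
    (fun b hb => h b (hB.mem_toFinset.mp hb))
  exact ⟨i₀, fun i hi b hb => h₀ i hi b (hB.mem_toFinset.mpr hb)⟩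


/-- If the 𝓜-convergence structure satisfies the Iterated Limits axiom,
then `P` is 𝓜-continuous. -/
theorem stmt_4 {P : Type u} [PartialOrder P] (M : Set (Set P)) (hM : MinSel M)
    (hiter : ∀ (I : Type u) (r : I → I → Prop) (f : I → P) (x : P),
      IsDirNet r → MConv M r f x →
      ∀ (J : I → Type u) (rJ : ∀ i, J i → J i → Prop) (g : ∀ i, J i → P),
        (∀ i, IsDirNet (rJ i)) → (∀ i, MConv M (rJ i) (g i) (f i)) →
        MConv M
          (fun (p q : I × (∀ i, J i)) => r p.1 q.1 ∧ ∀ i, rJ i (p.2 i) (q.2 i))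
          (fun p => g p.1 (p.2 p.1)) x) :
    MCont M := by
  
  classical
  intro x
  constructor
  · -- (M1)
    set I : Type u := {A : Set P // A ∈ M ∧ ∃ s : P, IsLUB A s ∧ x ≤ s} with hIdef
    have hIne : Nonempty I := ⟨⟨{x}, hM.2 x, x, isLUB_singleton, le_rfl⟩⟩
    set r : I → I → Prop := fun _ _ => True with hrdef
    have hr : IsDirNet r := ⟨fun _ => trivial, fun _ _ => trivial, hIne,
      fun i _ => ⟨i, trivial, trivial⟩⟩
    set si : I → P := fun i => Classical.choose i.2.2 with hsidef
    have hsi : ∀ i : I, IsLUB i.1 (si i) ∧ x ≤ si i := fun i => Classical.choose_spec i.2.2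
    have hAne : ∀ i : I, i.1.Nonempty := by
      intro i
      rcases Set.eq_empty_or_nonempty i.1 with h | h
      · exact absurd (h ▸ i.2.1) hM.1
      · exact h
    set J : I → Type u := fun i =>
      {q : Set P × P // q.1.Finite ∧ q.1.Nonempty ∧ q.1 ⊆ i.1 ∧ q.2 ∈ upperBounds q.1}
      with hJdef
    set rJ : ∀ i, J i → J i → Prop := fun _ q q' => q.1.1 ⊆ q'.1.1 with hrJdef
    set g : ∀ i, J i → P := fun _ q => q.1.2 with hgdef
    have hubsi : ∀ (i : I) (F : Set P), F ⊆ i.1 → si i ∈ upperBounds F :=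
      fun i F hF y hy => (hsi i).1.1 (hF hy)
    have hJne : ∀ i, Nonempty (J i) := by
      intro i
      obtain ⟨a, ha⟩ := hAne i
      exact ⟨⟨({a}, si i), Set.finite_singleton a, Set.singleton_nonempty a,
        Set.singleton_subset_iff.mpr ha,
        hubsi i {a} (Set.singleton_subset_iff.mpr ha)⟩⟩
    have hdirJ : ∀ i, IsDirNet (rJ i) := by
      intro i
      refine ⟨fun q => subset_rfl, fun h1 h2 => h1.trans h2, hJne i, fun q q' => ?_⟩
      have hsub : q.1.1 ∪ q'.1.1 ⊆ i.1 := Set.union_subset q.2.2.2.1 q'.2.2.2.1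
      exact ⟨⟨(q.1.1 ∪ q'.1.1, si i), q.2.1.union q'.2.1,
        q.2.2.1.mono Set.subset_union_left, hsub, hubsi i _ hsub⟩,
        Set.subset_union_left, Set.subset_union_right⟩
    have houter : MConv M r (fun _ : I => x) x :=
      ⟨{x}, x, hM.2 x, isLUB_singleton, le_rfl, fun a ha =>
        ⟨Classical.choice hIne, fun i _ => by
          rw [Set.mem_singleton_iff] at ha; exact ha.le⟩⟩
    have hinner : ∀ i, MConv M (rJ i) (g i) ((fun _ : I => x) i) := by
      intro i
      refine ⟨i.1, si i, i.2.1, (hsi i).1, (hsi i).2, fun a ha => ?_⟩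
      refine ⟨⟨({a}, si i), Set.finite_singleton a, Set.singleton_nonempty a,
        Set.singleton_subset_iff.mpr ha,
        hubsi i {a} (Set.singleton_subset_iff.mpr ha)⟩, fun q hq => ?_⟩
      exact q.2.2.2.2 (hq (Set.mem_singleton a))
    obtain ⟨B, t, hBM, hBt, hxt, hev⟩ :=
      hiter I r (fun _ => x) x hr houter J rJ g hdirJ hinner
    refine ⟨B, t, hBM, hBt, ?_, hxt⟩
    intro b hb A s hA hs hxs
    obtain ⟨k₀, hk₀⟩ := hev b hb
    set i : I := ⟨A, hA, s, hs, hxs⟩ with hidef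
    refine ⟨(k₀.2 i).1.1, (k₀.2 i).2.2.1, (k₀.2 i).2.1, (k₀.2 i).2.2.2.1, ?_⟩
    intro u hu
    set qn : J i := ⟨((k₀.2 i).1.1, u), (k₀.2 i).2.1, (k₀.2 i).2.2.1,
      (k₀.2 i).2.2.2.1, hu⟩ with hqndef
    have hupd : Function.update k₀.2 i qn i = qn := Function.update_self i qn k₀.2
    have hrel : ∀ j, rJ j (k₀.2 j) (Function.update k₀.2 i qn j) := by
      intro j
      rcases eq_or_ne j i with rfl | hj
      · rw [hupd]
      · rw [Function.update_of_ne hj]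
    have hle := hk₀ (i, Function.update k₀.2 i qn) ⟨trivial, hrel⟩
    simp only at hle
    rw [hupd] at hle
    exact hle
  · -- (M2)
    intro I r f z hr hconv hz
    simp only [Set.mem_setOf_eq] at hz ⊢
    by_contra hcon
    push_neg at hcon
    have hcon' : ∀ i₀, ∃ i, r i₀ i ∧ ¬ wayBelowM M x (f i) := hcon
    choose h hh1 hh2 using hcon'
    have hni : ∀ i : I, ∃ A : Set P, ∃ s : P, A ∈ M ∧ IsLUB A s ∧ f (h i) ≤ s ∧
        ∀ F : Set P, F.Nonempty → F.Finite → F ⊆ A →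
          ∃ u ∈ upperBounds F, ¬ x ≤ u := by
      intro i
      have := hh2 i
      unfold wayBelowM at this
      push_neg at this
      obtain ⟨A, s, hA, hs, hfs, hF⟩ := this
      refine ⟨A, s, hA, hs, hfs, fun F h1 h2 h3 => ?_⟩
      obtain ⟨u, hu1, hu2⟩ := Set.not_subset.mp (hF F h1 h2 h3)
      exact ⟨u, hu1, fun hxu => hu2 (Set.mem_Ici.mpr hxu)⟩
    choose Af sf hAfM hAfLUB hAfle hAfu using hni
    have hAfne : ∀ i : I, (Af i).Nonempty := by
      intro i
      rcases Set.eq_empty_or_nonempty (Af i) with he | he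
      · exact absurd (he ▸ hAfM i) hM.1
      · exact he
    set J : I → Type u := fun i =>
      {q : Set P × P // q.1.Finite ∧ q.1.Nonempty ∧ q.1 ⊆ Af i ∧
        q.2 ∈ upperBounds q.1 ∧ ¬ x ≤ q.2} with hJdef
    set rJ : ∀ i, J i → J i → Prop := fun _ q q' => q.1.1 ⊆ q'.1.1 with hrJdef
    set g : ∀ i, J i → P := fun _ q => q.1.2 with hgdef
    have hJne : ∀ i, Nonempty (J i) := by
      intro i
      obtain ⟨a, ha⟩ := hAfne i
      obtain ⟨u, hu1, hu2⟩ := hAfu i {a} (Set.singleton_nonempty a)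
        (Set.finite_singleton a) (Set.singleton_subset_iff.mpr ha)
      exact ⟨⟨({a}, u), Set.finite_singleton a, Set.singleton_nonempty a,
        Set.singleton_subset_iff.mpr ha, hu1, hu2⟩⟩
    have hdirJ : ∀ i, IsDirNet (rJ i) := by
      intro i
      refine ⟨fun q => subset_rfl, fun h1 h2 => h1.trans h2, hJne i, fun q q' => ?_⟩
      have hsub : q.1.1 ∪ q'.1.1 ⊆ Af i := Set.union_subset q.2.2.2.1 q'.2.2.2.1
      have hne : (q.1.1 ∪ q'.1.1).Nonempty := q.2.2.1.mono Set.subset_union_left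
      have hfin : (q.1.1 ∪ q'.1.1).Finite := q.2.1.union q'.2.1
      obtain ⟨u, hu1, hu2⟩ := hAfu i _ hne hfin hsub
      exact ⟨⟨(q.1.1 ∪ q'.1.1, u), hfin, hne, hsub, hu1, hu2⟩,
        Set.subset_union_left, Set.subset_union_right⟩
    have houter : MConv M r (fun i => f (h i)) z := by
      obtain ⟨A, s, hA, hs, hzs, hev⟩ := hconv
      refine ⟨A, s, hA, hs, hzs, fun a ha => ?_⟩
      obtain ⟨i₀, hi₀⟩ := hev a ha
      exact ⟨i₀, fun i hi => hi₀ (h i) (hr.trans hi (hh1 i))⟩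
    have hinner : ∀ i, MConv M (rJ i) (g i) ((fun i => f (h i)) i) := by
      intro i
      refine ⟨Af i, sf i, hAfM i, hAfLUB i, hAfle i, fun a ha => ?_⟩
      obtain ⟨u, hu1, hu2⟩ := hAfu i {a} (Set.singleton_nonempty a)
        (Set.finite_singleton a) (Set.singleton_subset_iff.mpr ha)
      refine ⟨⟨({a}, u), Set.finite_singleton a, Set.singleton_nonempty a,
        Set.singleton_subset_iff.mpr ha, hu1, hu2⟩, fun q hq => ?_⟩
      exact q.2.2.2.2.1 (hq (Set.mem_singleton a))
    obtain ⟨C, t, hCM, hCt, hzt, hev'⟩ :=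
      hiter I r (fun i => f (h i)) z hr houter J rJ g hdirJ hinner
    obtain ⟨B, hBne, hBfin, hBC, hBub⟩ := hz C t hCM hCt hzt
    have hK : IsDirNet (fun (p q : I × (∀ i, J i)) =>
        r p.1 q.1 ∧ ∀ i, rJ i (p.2 i) (q.2 i)) := by
      refine ⟨fun p => ⟨hr.refl p.1, fun j => (hdirJ j).refl (p.2 j)⟩,
        fun h1 h2 => ⟨hr.trans h1.1 h2.1, fun j => (hdirJ j).trans (h1.2 j) (h2.2 j)⟩,
        ⟨⟨Classical.choice hr.nonempty, fun j => Classical.choice (hJne j)⟩⟩,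
        fun p q => ?_⟩
      obtain ⟨k, hk1, hk2⟩ := hr.directed p.1 q.1
      refine ⟨⟨k, fun j => Classical.choose ((hdirJ j).directed (p.2 j) (q.2 j))⟩,
        ⟨hk1, fun j => (Classical.choose_spec ((hdirJ j).directed (p.2 j) (q.2 j))).1⟩,
        ⟨hk2, fun j => (Classical.choose_spec ((hdirJ j).directed (p.2 j) (q.2 j))).2⟩⟩
    obtain ⟨k₀, hk₀⟩ := ev_all hK hBfin (fun b hb => hev' b (hBC hb))
    have hall : ∀ b ∈ B, b ≤ g k₀.1 (k₀.2 k₀.1) :=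
      hk₀ k₀ ⟨hr.refl k₀.1, fun j => (hdirJ j).refl (k₀.2 j)⟩
    have hx : x ≤ g k₀.1 (k₀.2 k₀.1) :=
      Set.mem_Ici.mp (hBub (fun b hb => hall b hb))
    exact (k₀.2 k₀.1).2.2.2.2.2 hx
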